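/- Assume: (positivity) P(T=t, M=m, Z=z) > 0 for every t ∈ {0,1}, m ∈ 𝕄 and every z with P(Z=z) > 0; (i) cross-world independence: for all t, t' ∈ {0,1}, m, m' ∈ 𝕄 and z with P(Z=z) > 0, E[Y(t,m)·1{M(t')=m'} | Z=z] = E[Y(t,m) | Z=z] · P(M(t')=m' | Z=z); (ii) mediator ignorability: for all t, t' ∈ {0,1}, m ∈ 𝕄, v ∈ V and u, s with P(Z_TM=u, Z_MY=s) > 0, P(M(t)=m, T=t', Z_TY=v | Z_TM=u, Z_MY=s) = P(M(t)=m | Z_TM=u, Z_MY=s) · P(T=t', Z_TY=v | Z_TM=u, Z_MY=s); (iii) outcome ignorability: for all t, t' ∈ {0,1}, m, m' ∈ 𝕄, u ∈ U and v, s with P(Z_TY=v, Z_MY=s) > 0, E[Y(t,m)·1{T=t', M=m', Z_TM=u} | Z_TY=v, Z_MY=s] = E[Y(t,m) | Z_TY=v, Z_MY=s] · P(T=t', M=m', Z_TM=u | Z_TY=v, Z_MY=s). Then NDE = ∑_{z=(u,v,s) : P(Z=z)>0} ∑_{m ∈ 𝕄} (E[Y | T=1, M=m, Z_TY=v, Z_MY=s]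 − E[Y | T=0, M=m, Z_TY=v, Z_MY=s]) · P(M=m | T=0, Z_TM=u, Z_MY=s) · P(Z=z). -/

import Mathlib

open Finset
open scoped Classical

/-- Probability of an event `A` under the finite distribution `p`. -/
noncomputable def Pr {Ω : Type*} [Fintype Ω] (p : Ω → ℝ) (A : Ω → Prop) : ℝ :=
  ∑ ω, if A ω then p ω else 0

/-- Expectation of a random variable `V` under the finite distribution `p`. -/
noncomputable def Ex {Ω : Type*} [Fintype Ω] (p : Ω → ℝ) (V : Ω → ℝ) : ℝ :=
  ∑ ω, p ω * V ω

/-- Conditional probability `P(A | B) = P(A ∩ B) / P(B)`. -/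
noncomputable def PrCond {Ω : Type*} [Fintype Ω] (p : Ω → ℝ) (A B : Ω → Prop) : ℝ :=
  Pr p (fun ω => A ω ∧ B ω) / Pr p B

/-- Conditional expectation `E[V | B] = E[V·1_B] / P(B)`. -/
noncomputable def ExCond {Ω : Type*} [Fintype Ω] (p : Ω → ℝ) (V : Ω → ℝ) (B : Ω → Prop) : ℝ :=
  Ex p (fun ω => V ω * (if B ω then 1 else 0)) / Pr p B

section Helpers
variable {Ω : Type*} [Fintype Ω]

noncomputable def exB (p : Ω → ℝ) (f : Ω → ℝ) (B : Ω → Prop) : ℝ :=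
  ∑ ω, if B ω then p ω * f ω else 0

lemma Ex_ind_eq_exB (p f : Ω → ℝ) (B : Ω → Prop) :
    Ex p (fun ω => f ω * (if B ω then 1 else 0)) = exB p f B := by
  unfold Ex exB
  apply Finset.sum_congr rfl
  intro ω _
  by_cases h : B ω <;> simp [h]

lemma ExCond_eq_exB (p f : Ω → ℝ) (B : Ω → Prop) :
    ExCond p f B = exB p f B / Pr p B := by
  unfold ExCond; rw [Ex_ind_eq_exB]

lemma PrCond_eq (p : Ω → ℝ) (A B : Ω → Prop) :
    PrCond p A B = Pr p (fun ω => A ω ∧ B ω) / Pr p B := rfl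

lemma exB_congr (p f : Ω → ℝ) {B C : Ω → Prop} (h : ∀ ω, B ω ↔ C ω) :
    exB p f B = exB p f C := by
  unfold exB; exact Finset.sum_congr rfl fun ω _ => by simp only [h ω]

lemma exB_congr_f (p : Ω → ℝ) {f g : Ω → ℝ} {B : Ω → Prop} (h : ∀ ω, B ω → f ω = g ω) :
    exB p f B = exB p g B := by
  unfold exB
  apply Finset.sum_congr rfl
  intro ω _
  by_cases hb : B ω
  · simp only [if_pos hb, h ω hb]
  · simp [hb]

lemma Pr_congr (p : Ω → ℝ) {B C : Ω → Prop} (h : ∀ ω, B ω ↔ C ω) :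
    Pr p B = Pr p C := by
  unfold Pr; exact Finset.sum_congr rfl fun ω _ => by simp only [h ω]

lemma Pr_eq_exB_one (p : Ω → ℝ) (B : Ω → Prop) : Pr p B = exB p (fun _ => 1) B := by
  unfold Pr exB; simp

lemma Pr_nonneg (p : Ω → ℝ) (hp : ∀ ω, 0 ≤ p ω) (B : Ω → Prop) : 0 ≤ Pr p B :=
  Finset.sum_nonneg fun ω _ => by by_cases h : B ω <;> simp [h, hp ω]

lemma Pr_mono (p : Ω → ℝ) (hp : ∀ ω, 0 ≤ p ω) {B C : Ω → Prop} (h : ∀ ω, B ω → C ω) :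
    Pr p B ≤ Pr p C := by
  unfold Pr
  apply Finset.sum_le_sum
  intro ω _
  by_cases hb : B ω
  · simp [hb, h ω hb]
  · by_cases hc : C ω <;> simp [hb, hc, hp ω]

lemma exB_mul_ind (p f : Ω → ℝ) (A B : Ω → Prop) [DecidablePred A] :
    exB p (fun ω => f ω * (if A ω then 1 else 0)) B = exB p f (fun ω => A ω ∧ B ω) := by
  unfold exB
  apply Finset.sum_congr rfl
  intro ω _
  by_cases ha : A ω <;> by_cases hb : B ω <;> simp [ha, hb]

lemma exB_fiber {ι : Type*} [Fintype ι] (p f : Ω → ℝ) (g : Ω → ι) (C : Ω → Prop) :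
    ∑ i, exB p f (fun ω => g ω = i ∧ C ω) = exB p f C := by
  classical
  unfold exB
  rw [Finset.sum_comm]
  apply Finset.sum_congr rfl
  intro ω _
  by_cases hc : C ω
  · simp [hc, Finset.sum_ite_eq]
  · simp [hc]

lemma exB_sum {ι : Type*} [Fintype ι] (p : Ω → ℝ) (F : ι → Ω → ℝ) (B : Ω → Prop) :
    exB p (fun ω => ∑ i, F i ω) B = ∑ i, exB p (F i) B := by
  unfold exB
  rw [Finset.sum_comm]
  apply Finset.sum_congr rfl
  intro ω _
  by_cases hb : B ω <;> simp [hb, Finset.mul_sum]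

lemma exB_sub (p f g : Ω → ℝ) (B : Ω → Prop) :
    exB p (fun ω => f ω - g ω) B = exB p f B - exB p g B := by
  unfold exB
  rw [← Finset.sum_sub_distrib]
  apply Finset.sum_congr rfl
  intro ω _
  by_cases hb : B ω <;> simp [hb, mul_sub]

lemma Pr_pos_exists {p : Ω → ℝ} {B : Ω → Prop} (h : 0 < Pr p B) : ∃ ω, B ω := by
  by_contra hc
  push_neg at hc
  have h0 : Pr p B = 0 := by unfold Pr; simp [hc]
  rw [h0] at h; exact lt_irrefl 0 h

lemma exB_zero_of_Pr_zero (p : Ω → ℝ) (hp : ∀ ω, 0 ≤ p ω) (f : Ω → ℝ) {B : Ω → Prop}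
    (h : Pr p B = 0) : exB p f B = 0 := by
  have hz : ∀ ω, B ω → p ω = 0 := by
    intro ω hb
    have := (Finset.sum_eq_zero_iff_of_nonneg
      (fun ω _ => by by_cases hb' : B ω <;> simp [hb', hp ω] : ∀ ω ∈ Finset.univ, 0 ≤ if B ω then p ω else 0)).mp h ω (Finset.mem_univ ω)
    simpa [hb] using this
  unfold exB
  apply Finset.sum_eq_zero
  intro ω _
  by_cases hb : B ω <;> simp [hb]
  left; exact hz ω hb

lemma Ex_partition {ι : Type*} [Fintype ι] (p : Ω → ℝ) (hp : ∀ ω, 0 ≤ p ω)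
    (g : Ω → ι) (V : Ω → ℝ) :
    Ex p V = ∑ i ∈ Finset.univ.filter (fun i => 0 < Pr p (fun ω => g ω = i)),
      ExCond p V (fun ω => g ω = i) * Pr p (fun ω => g ω = i) := by
  classical
  have hT : exB p V (fun _ => True) = Ex p V := by unfold exB Ex; simp
  have h1 : Ex p V = ∑ i, exB p V (fun ω => g ω = i) := by
    rw [← hT, ← exB_fiber p V g (fun _ => True)]
    exact Finset.sum_congr rfl fun i _ => exB_congr p V (by simp)
  have h2 : ∑ i ∈ Finset.univ.filter (fun i => 0 < Pr p (fun ω => g ω = i)),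
      exB p V (fun ω => g ω = i) = ∑ i, exB p V (fun ω => g ω = i) := by
    apply Finset.sum_subset (Finset.filter_subset _ _)
    intro i _ hi
    rw [Finset.mem_filter] at hi
    have hnn := Pr_nonneg p hp (fun ω => g ω = i)
    have h0 : Pr p (fun ω => g ω = i) = 0 := by
      rcases lt_or_eq_of_le hnn with h | h
      · exact absurd ⟨Finset.mem_univ i, h⟩ hi
      · exact h.symm
    exact exB_zero_of_Pr_zero p hp V h0
  rw [h1, ← h2]
  apply Finset.sum_congr rfl
  intro i hi
  rw [Finset.mem_filter] at hi
  rw [ExCond_eq_exB, div_mul_cancel₀ _ (ne_of_gt hi.2)]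

end Helpers

lemma div_rel {a b c P : ℝ} (hP : P ≠ 0) (h : a / P = b / P * (c / P)) : a * P = b * c := by
  field_simp at h
  exact mul_right_cancel₀ hP (by linear_combination P * h)

lemma Pr_fiber {Ω : Type*} [Fintype Ω] {ι : Type*} [Fintype ι] (p : Ω → ℝ) (g : Ω → ι)
    (C : Ω → Prop) : ∑ i, Pr p (fun ω => g ω = i ∧ C ω) = Pr p C := by
  simp only [Pr_eq_exB_one]
  exact exB_fiber p (fun _ => 1) g C


/-- identification of NDE (Theorem 2, Equation 8 of the paper). -/
theorem stmt6 {Ω 𝕄 U V S : Type*}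
    [Fintype Ω] [Fintype 𝕄] [Fintype U] [Fintype V] [Fintype S]
    (p : Ω → ℝ) (hp : ∀ ω, 0 ≤ p ω) (hp1 : ∑ ω, p ω = 1)
    (T : Ω → Fin 2) (M : Fin 2 → Ω → 𝕄) (Y : Fin 2 → 𝕄 → Ω → ℝ)
    (ZTM : Ω → U) (ZTY : Ω → V) (ZMY : Ω → S)
    -- positivity
    (hpos : ∀ (t : Fin 2) (m : 𝕄) (z : U × V × S),
      0 < Pr p (fun ω => (ZTM ω, ZTY ω, ZMY ω) = z) →
      0 < Pr p (fun ω => T ω = t ∧ M (T ω) ω = m ∧ (ZTM ω, ZTY ω, ZMY ω) = z))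
    -- (i) cross-world independence given Z
    (hCW : ∀ (t t' : Fin 2) (m m' : 𝕄) (z : U × V × S),
      0 < Pr p (fun ω => (ZTM ω, ZTY ω, ZMY ω) = z) →
      ExCond p (fun ω => Y t m ω * (if M t' ω = m' then 1 else 0))
          (fun ω => (ZTM ω, ZTY ω, ZMY ω) = z) =
        ExCond p (fun ω => Y t m ω) (fun ω => (ZTM ω, ZTY ω, ZMY ω) = z) *
          PrCond p (fun ω => M t' ω = m') (fun ω => (ZTM ω, ZTY ω, ZMY ω) = z))
    -- (ii) mediator ignorability
    (hMed : ∀ (t t' : Fin 2) (m : 𝕄) (v : V) (u : U) (s : S),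
      0 < Pr p (fun ω => ZTM ω = u ∧ ZMY ω = s) →
      PrCond p (fun ω => M t ω = m ∧ T ω = t' ∧ ZTY ω = v)
          (fun ω => ZTM ω = u ∧ ZMY ω = s) =
        PrCond p (fun ω => M t ω = m) (fun ω => ZTM ω = u ∧ ZMY ω = s) *
          PrCond p (fun ω => T ω = t' ∧ ZTY ω = v) (fun ω => ZTM ω = u ∧ ZMY ω = s))
    -- (iii) outcome ignorability
    (hOut : ∀ (t t' : Fin 2) (m m' : 𝕄) (u : U) (v : V) (s : S),
      0 < Pr p (fun ω => ZTY ω = v ∧ ZMY ω = s) →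
      ExCond p
          (fun ω => Y t m ω * (if T ω = t' ∧ M (T ω) ω = m' ∧ ZTM ω = u then 1 else 0))
          (fun ω => ZTY ω = v ∧ ZMY ω = s) =
        ExCond p (fun ω => Y t m ω) (fun ω => ZTY ω = v ∧ ZMY ω = s) *
          PrCond p (fun ω => T ω = t' ∧ M (T ω) ω = m' ∧ ZTM ω = u)
            (fun ω => ZTY ω = v ∧ ZMY ω = s)) :
    Ex p (fun ω => Y 1 (M 0 ω) ω - Y 0 (M 0 ω) ω) =
      ∑ z ∈ Finset.univ.filter
          (fun z : U × V × S => 0 < Pr p (fun ω => (ZTM ω, ZTY ω, ZMY ω) = z)),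
        ∑ m : 𝕄,
          (ExCond p (fun ω => Y (T ω) (M (T ω) ω) ω)
              (fun ω => T ω = 1 ∧ M (T ω) ω = m ∧ ZTY ω = z.2.1 ∧ ZMY ω = z.2.2) -
            ExCond p (fun ω => Y (T ω) (M (T ω) ω) ω)
              (fun ω => T ω = 0 ∧ M (T ω) ω = m ∧ ZTY ω = z.2.1 ∧ ZMY ω = z.2.2)) *
            PrCond p (fun ω => M (T ω) ω = m)
              (fun ω => T ω = 0 ∧ ZTM ω = z.1 ∧ ZMY ω = z.2.2) *
            Pr p (fun ω => (ZTM ω, ZTY ω, ZMY ω) = z) := by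
  classical
  rw [Ex_partition p hp (fun ω => (ZTM ω, ZTY ω, ZMY ω))]
  apply Finset.sum_congr rfl
  intro z hzmem
  obtain ⟨u, v, s⟩ := z
  rw [Finset.mem_filter] at hzmem
  have hz : 0 < Pr p (fun ω => (ZTM ω, ZTY ω, ZMY ω) = (u, v, s)) := hzmem.2
  dsimp only
  have hPz : Pr p (fun ω => (ZTM ω, ZTY ω, ZMY ω) = (u, v, s)) ≠ 0 := ne_of_gt hz
  have hZiff : ∀ ω, ((ZTM ω, ZTY ω, ZMY ω) = (u, v, s)) ↔
      (ZTM ω = u ∧ ZTY ω = v ∧ ZMY ω = s) := fun ω => by simp [Prod.ext_iff]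
  have hvs : 0 < Pr p (fun ω => ZTY ω = v ∧ ZMY ω = s) :=
    lt_of_lt_of_le hz (Pr_mono p hp (fun ω h =>
      ⟨((hZiff ω).mp h).2.1, ((hZiff ω).mp h).2.2⟩))
  have hus : 0 < Pr p (fun ω => ZTM ω = u ∧ ZMY ω = s) :=
    lt_of_lt_of_le hz (Pr_mono p hp (fun ω h =>
      ⟨((hZiff ω).mp h).1, ((hZiff ω).mp h).2.2⟩))
  have htmvs : ∀ (t : Fin 2) (m : 𝕄),
      0 < Pr p (fun ω => T ω = t ∧ M (T ω) ω = m ∧ ZTY ω = v ∧ ZMY ω = s) := by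
    intro t m
    refine lt_of_lt_of_le (hpos t m (u, v, s) hz) (Pr_mono p hp (fun ω h => ?_))
    exact ⟨h.1, h.2.1, ((hZiff ω).mp h.2.2).2.1, ((hZiff ω).mp h.2.2).2.2⟩
  have h0us : 0 < Pr p (fun ω => T ω = 0 ∧ ZTM ω = u ∧ ZMY ω = s) := by
    obtain ⟨ω0, _⟩ := Pr_pos_exists hz
    refine lt_of_lt_of_le (hpos 0 (M 0 ω0) (u, v, s) hz) (Pr_mono p hp (fun ω h => ?_))
    exact ⟨h.1, ((hZiff ω).mp h.2.2).1, ((hZiff ω).mp h.2.2).2.2⟩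
  -- R2 : E[Y(t,m) 1_{Z=z}] * P(vs) = E[Y(t,m) 1_{vs}] * P(Z=z)
  have R2 : ∀ (t : Fin 2) (m : 𝕄),
      exB p (Y t m) (fun ω => (ZTM ω, ZTY ω, ZMY ω) = (u, v, s)) *
        Pr p (fun ω => ZTY ω = v ∧ ZMY ω = s) =
      exB p (Y t m) (fun ω => ZTY ω = v ∧ ZMY ω = s) *
        Pr p (fun ω => (ZTM ω, ZTY ω, ZMY ω) = (u, v, s)) := by
    intro t m
    have base : ∀ x : Fin 2 × 𝕄,
        exB p (Y t m) (fun ω => (T ω, M (T ω) ω) = x ∧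
            (ZTM ω = u ∧ ZTY ω = v ∧ ZMY ω = s)) *
          Pr p (fun ω => ZTY ω = v ∧ ZMY ω = s) =
        exB p (Y t m) (fun ω => ZTY ω = v ∧ ZMY ω = s) *
          Pr p (fun ω => (T ω, M (T ω) ω) = x ∧
            (ZTM ω = u ∧ ZTY ω = v ∧ ZMY ω = s)) := by
      intro x
      have h1 := hOut t x.1 m x.2 u v s hvs
      rw [ExCond_eq_exB, ExCond_eq_exB, PrCond_eq, exB_mul_ind] at h1
      have h2 := div_rel (ne_of_gt hvs) h1
      have hiff : ∀ ω, ((T ω = x.1 ∧ M (T ω) ω = x.2 ∧ ZTM ω = u) ∧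
          (ZTY ω = v ∧ ZMY ω = s)) ↔
          ((T ω, M (T ω) ω) = x ∧ (ZTM ω = u ∧ ZTY ω = v ∧ ZMY ω = s)) := by
        intro ω; simp only [Prod.ext_iff]; tauto
      rw [exB_congr p _ hiff, Pr_congr p hiff] at h2
      exact h2
    have hsumL : ∑ x : Fin 2 × 𝕄, exB p (Y t m) (fun ω => (T ω, M (T ω) ω) = x ∧
        (ZTM ω = u ∧ ZTY ω = v ∧ ZMY ω = s)) =
        exB p (Y t m) (fun ω => (ZTM ω, ZTY ω, ZMY ω) = (u, v, s)) := by
      rw [exB_fiber p (Y t m) (fun ω => (T ω, M (T ω) ω))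
        (fun ω => ZTM ω = u ∧ ZTY ω = v ∧ ZMY ω = s)]
      exact exB_congr p _ (fun ω => (hZiff ω).symm)
    have hsumR : ∑ x : Fin 2 × 𝕄, Pr p (fun ω => (T ω, M (T ω) ω) = x ∧
        (ZTM ω = u ∧ ZTY ω = v ∧ ZMY ω = s)) =
        Pr p (fun ω => (ZTM ω, ZTY ω, ZMY ω) = (u, v, s)) := by
      rw [Pr_fiber p (fun ω => (T ω, M (T ω) ω))
        (fun ω => ZTM ω = u ∧ ZTY ω = v ∧ ZMY ω = s)]
      exact Pr_congr p (fun ω => (hZiff ω).symm)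
    calc exB p (Y t m) (fun ω => (ZTM ω, ZTY ω, ZMY ω) = (u, v, s)) *
          Pr p (fun ω => ZTY ω = v ∧ ZMY ω = s)
        = (∑ x : Fin 2 × 𝕄, exB p (Y t m) (fun ω => (T ω, M (T ω) ω) = x ∧
            (ZTM ω = u ∧ ZTY ω = v ∧ ZMY ω = s))) *
          Pr p (fun ω => ZTY ω = v ∧ ZMY ω = s) := by rw [hsumL]
      _ = ∑ x : Fin 2 × 𝕄, exB p (Y t m) (fun ω => (T ω, M (T ω) ω) = x ∧
            (ZTM ω = u ∧ ZTY ω = v ∧ ZMY ω = s)) *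
          Pr p (fun ω => ZTY ω = v ∧ ZMY ω = s) := Finset.sum_mul _ _ _
      _ = ∑ x : Fin 2 × 𝕄, exB p (Y t m) (fun ω => ZTY ω = v ∧ ZMY ω = s) *
          Pr p (fun ω => (T ω, M (T ω) ω) = x ∧
            (ZTM ω = u ∧ ZTY ω = v ∧ ZMY ω = s)) :=
          Finset.sum_congr rfl (fun x _ => base x)
      _ = exB p (Y t m) (fun ω => ZTY ω = v ∧ ZMY ω = s) *
          ∑ x : Fin 2 × 𝕄, Pr p (fun ω => (T ω, M (T ω) ω) = x ∧
            (ZTM ω = u ∧ ZTY ω = v ∧ ZMY ω = s)) := (Finset.mul_sum _ _ _).symm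
      _ = _ := by rw [hsumR]
  -- R3 : E[Yobs 1_{T=t,M=m,vs}] * P(vs) = E[Y(t,m) 1_{vs}] * P(T=t,M=m,vs)
  have R3 : ∀ (t : Fin 2) (m : 𝕄),
      exB p (fun ω => Y (T ω) (M (T ω) ω) ω)
          (fun ω => T ω = t ∧ M (T ω) ω = m ∧ ZTY ω = v ∧ ZMY ω = s) *
        Pr p (fun ω => ZTY ω = v ∧ ZMY ω = s) =
      exB p (Y t m) (fun ω => ZTY ω = v ∧ ZMY ω = s) *
        Pr p (fun ω => T ω = t ∧ M (T ω) ω = m ∧ ZTY ω = v ∧ ZMY ω = s) := by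
    intro t m
    have base : ∀ u' : U,
        exB p (Y t m) (fun ω => ZTM ω = u' ∧
            (T ω = t ∧ M (T ω) ω = m ∧ ZTY ω = v ∧ ZMY ω = s)) *
          Pr p (fun ω => ZTY ω = v ∧ ZMY ω = s) =
        exB p (Y t m) (fun ω => ZTY ω = v ∧ ZMY ω = s) *
          Pr p (fun ω => ZTM ω = u' ∧
            (T ω = t ∧ M (T ω) ω = m ∧ ZTY ω = v ∧ ZMY ω = s)) := by
      intro u'
      have h1 := hOut t t m m u' v s hvs
      rw [ExCond_eq_exB, ExCond_eq_exB, PrCond_eq, exB_mul_ind] at h1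
      have h2 := div_rel (ne_of_gt hvs) h1
      have hiff : ∀ ω, ((T ω = t ∧ M (T ω) ω = m ∧ ZTM ω = u') ∧
          (ZTY ω = v ∧ ZMY ω = s)) ↔
          (ZTM ω = u' ∧ (T ω = t ∧ M (T ω) ω = m ∧ ZTY ω = v ∧ ZMY ω = s)) := by
        intro ω; tauto
      rw [exB_congr p _ hiff, Pr_congr p hiff] at h2
      exact h2
    have hsumL : ∑ u' : U, exB p (Y t m) (fun ω => ZTM ω = u' ∧
        (T ω = t ∧ M (T ω) ω = m ∧ ZTY ω = v ∧ ZMY ω = s)) =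
        exB p (fun ω => Y (T ω) (M (T ω) ω) ω)
          (fun ω => T ω = t ∧ M (T ω) ω = m ∧ ZTY ω = v ∧ ZMY ω = s) := by
      rw [exB_fiber p (Y t m) ZTM
        (fun ω => T ω = t ∧ M (T ω) ω = m ∧ ZTY ω = v ∧ ZMY ω = s)]
      apply exB_congr_f
      intro ω h
      rw [← h.1, ← h.2.1]
    have hsumR : ∑ u' : U, Pr p (fun ω => ZTM ω = u' ∧
        (T ω = t ∧ M (T ω) ω = m ∧ ZTY ω = v ∧ ZMY ω = s)) =
        Pr p (fun ω => T ω = t ∧ M (T ω) ω = m ∧ ZTY ω = v ∧ ZMY ω = s) :=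
      Pr_fiber p ZTM _
    calc exB p (fun ω => Y (T ω) (M (T ω) ω) ω)
          (fun ω => T ω = t ∧ M (T ω) ω = m ∧ ZTY ω = v ∧ ZMY ω = s) *
          Pr p (fun ω => ZTY ω = v ∧ ZMY ω = s)
        = (∑ u' : U, exB p (Y t m) (fun ω => ZTM ω = u' ∧
            (T ω = t ∧ M (T ω) ω = m ∧ ZTY ω = v ∧ ZMY ω = s))) *
          Pr p (fun ω => ZTY ω = v ∧ ZMY ω = s) := by rw [hsumL]
      _ = ∑ u' : U, exB p (Y t m) (fun ω => ZTM ω = u' ∧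
            (T ω = t ∧ M (T ω) ω = m ∧ ZTY ω = v ∧ ZMY ω = s)) *
          Pr p (fun ω => ZTY ω = v ∧ ZMY ω = s) := Finset.sum_mul _ _ _
      _ = ∑ u' : U, exB p (Y t m) (fun ω => ZTY ω = v ∧ ZMY ω = s) *
          Pr p (fun ω => ZTM ω = u' ∧
            (T ω = t ∧ M (T ω) ω = m ∧ ZTY ω = v ∧ ZMY ω = s)) :=
          Finset.sum_congr rfl (fun u' _ => base u')
      _ = exB p (Y t m) (fun ω => ZTY ω = v ∧ ZMY ω = s) *
          ∑ u' : U, Pr p (fun ω => ZTM ω = u' ∧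
            (T ω = t ∧ M (T ω) ω = m ∧ ZTY ω = v ∧ ZMY ω = s)) :=
          (Finset.mul_sum _ _ _).symm
      _ = _ := by rw [hsumR]
  -- R4 : P(M0=m, Z=z) * P(us) = P(M0=m, us) * P(Z=z)
  have R4 : ∀ m : 𝕄,
      Pr p (fun ω => M 0 ω = m ∧ (ZTM ω, ZTY ω, ZMY ω) = (u, v, s)) *
        Pr p (fun ω => ZTM ω = u ∧ ZMY ω = s) =
      Pr p (fun ω => M 0 ω = m ∧ (ZTM ω = u ∧ ZMY ω = s)) *
        Pr p (fun ω => (ZTM ω, ZTY ω, ZMY ω) = (u, v, s)) := by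
    intro m
    have base : ∀ t' : Fin 2,
        Pr p (fun ω => T ω = t' ∧
            (M 0 ω = m ∧ ZTY ω = v ∧ (ZTM ω = u ∧ ZMY ω = s))) *
          Pr p (fun ω => ZTM ω = u ∧ ZMY ω = s) =
        Pr p (fun ω => M 0 ω = m ∧ (ZTM ω = u ∧ ZMY ω = s)) *
          Pr p (fun ω => T ω = t' ∧ (ZTY ω = v ∧ (ZTM ω = u ∧ ZMY ω = s))) := by
      intro t'
      have h1 := hMed 0 t' m v u s hus
      rw [PrCond_eq, PrCond_eq, PrCond_eq] at h1
      have h2 := div_rel (ne_of_gt hus) h1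
      have hiff1 : ∀ ω, ((M 0 ω = m ∧ T ω = t' ∧ ZTY ω = v) ∧
          (ZTM ω = u ∧ ZMY ω = s)) ↔
          (T ω = t' ∧ (M 0 ω = m ∧ ZTY ω = v ∧ (ZTM ω = u ∧ ZMY ω = s))) := by
        intro ω; tauto
      have hiff2 : ∀ ω, ((T ω = t' ∧ ZTY ω = v) ∧ (ZTM ω = u ∧ ZMY ω = s)) ↔
          (T ω = t' ∧ (ZTY ω = v ∧ (ZTM ω = u ∧ ZMY ω = s))) := by
        intro ω; tauto
      rw [Pr_congr p hiff1, Pr_congr p hiff2] at h2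
      exact h2
    have hsumL : ∑ t' : Fin 2, Pr p (fun ω => T ω = t' ∧
        (M 0 ω = m ∧ ZTY ω = v ∧ (ZTM ω = u ∧ ZMY ω = s))) =
        Pr p (fun ω => M 0 ω = m ∧ (ZTM ω, ZTY ω, ZMY ω) = (u, v, s)) := by
      rw [Pr_fiber p T (fun ω => M 0 ω = m ∧ ZTY ω = v ∧ (ZTM ω = u ∧ ZMY ω = s))]
      apply Pr_congr
      intro ω
      rw [hZiff ω]
      tauto
    have hsumR : ∑ t' : Fin 2, Pr p (fun ω => T ω = t' ∧
        (ZTY ω = v ∧ (ZTM ω = u ∧ ZMY ω = s))) =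
        Pr p (fun ω => (ZTM ω, ZTY ω, ZMY ω) = (u, v, s)) := by
      rw [Pr_fiber p T (fun ω => ZTY ω = v ∧ (ZTM ω = u ∧ ZMY ω = s))]
      apply Pr_congr
      intro ω
      rw [hZiff ω]
      tauto
    calc Pr p (fun ω => M 0 ω = m ∧ (ZTM ω, ZTY ω, ZMY ω) = (u, v, s)) *
          Pr p (fun ω => ZTM ω = u ∧ ZMY ω = s)
        = (∑ t' : Fin 2, Pr p (fun ω => T ω = t' ∧
            (M 0 ω = m ∧ ZTY ω = v ∧ (ZTM ω = u ∧ ZMY ω = s)))) *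
          Pr p (fun ω => ZTM ω = u ∧ ZMY ω = s) := by rw [hsumL]
      _ = ∑ t' : Fin 2, Pr p (fun ω => T ω = t' ∧
            (M 0 ω = m ∧ ZTY ω = v ∧ (ZTM ω = u ∧ ZMY ω = s))) *
          Pr p (fun ω => ZTM ω = u ∧ ZMY ω = s) := Finset.sum_mul _ _ _
      _ = ∑ t' : Fin 2, Pr p (fun ω => M 0 ω = m ∧ (ZTM ω = u ∧ ZMY ω = s)) *
          Pr p (fun ω => T ω = t' ∧ (ZTY ω = v ∧ (ZTM ω = u ∧ ZMY ω = s))) :=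
          Finset.sum_congr rfl (fun t' _ => base t')
      _ = Pr p (fun ω => M 0 ω = m ∧ (ZTM ω = u ∧ ZMY ω = s)) *
          ∑ t' : Fin 2, Pr p (fun ω => T ω = t' ∧
            (ZTY ω = v ∧ (ZTM ω = u ∧ ZMY ω = s))) := (Finset.mul_sum _ _ _).symm
      _ = _ := by rw [hsumR]
  -- R5 : P(M=m, T=0, us) * P(us) = P(M0=m, us) * P(T=0, us)
  have R5 : ∀ m : 𝕄,
      Pr p (fun ω => M (T ω) ω = m ∧ (T ω = 0 ∧ ZTM ω = u ∧ ZMY ω = s)) *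
        Pr p (fun ω => ZTM ω = u ∧ ZMY ω = s) =
      Pr p (fun ω => M 0 ω = m ∧ (ZTM ω = u ∧ ZMY ω = s)) *
        Pr p (fun ω => T ω = 0 ∧ ZTM ω = u ∧ ZMY ω = s) := by
    intro m
    have base : ∀ v' : V,
        Pr p (fun ω => ZTY ω = v' ∧
            (M 0 ω = m ∧ T ω = 0 ∧ (ZTM ω = u ∧ ZMY ω = s))) *
          Pr p (fun ω => ZTM ω = u ∧ ZMY ω = s) =
        Pr p (fun ω => M 0 ω = m ∧ (ZTM ω = u ∧ ZMY ω = s)) *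
          Pr p (fun ω => ZTY ω = v' ∧ (T ω = 0 ∧ (ZTM ω = u ∧ ZMY ω = s))) := by
      intro v'
      have h1 := hMed 0 0 m v' u s hus
      rw [PrCond_eq, PrCond_eq, PrCond_eq] at h1
      have h2 := div_rel (ne_of_gt hus) h1
      have hiff1 : ∀ ω, ((M 0 ω = m ∧ T ω = 0 ∧ ZTY ω = v') ∧
          (ZTM ω = u ∧ ZMY ω = s)) ↔
          (ZTY ω = v' ∧ (M 0 ω = m ∧ T ω = 0 ∧ (ZTM ω = u ∧ ZMY ω = s))) := by
        intro ω; tauto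
      have hiff2 : ∀ ω, ((T ω = 0 ∧ ZTY ω = v') ∧ (ZTM ω = u ∧ ZMY ω = s)) ↔
          (ZTY ω = v' ∧ (T ω = 0 ∧ (ZTM ω = u ∧ ZMY ω = s))) := by
        intro ω; tauto
      rw [Pr_congr p hiff1, Pr_congr p hiff2] at h2
      exact h2
    have hsumL : ∑ v' : V, Pr p (fun ω => ZTY ω = v' ∧
        (M 0 ω = m ∧ T ω = 0 ∧ (ZTM ω = u ∧ ZMY ω = s))) =
        Pr p (fun ω => M (T ω) ω = m ∧ (T ω = 0 ∧ ZTM ω = u ∧ ZMY ω = s)) := by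
      rw [Pr_fiber p ZTY (fun ω => M 0 ω = m ∧ T ω = 0 ∧ (ZTM ω = u ∧ ZMY ω = s))]
      apply Pr_congr
      intro ω
      constructor
      · rintro ⟨hm, ht, hu', hs'⟩
        exact ⟨by rw [ht]; exact hm, ht, hu', hs'⟩
      · rintro ⟨hm, ht, hu', hs'⟩
        exact ⟨by rw [← ht]; exact hm, ht, hu', hs'⟩
    have hsumR : ∑ v' : V, Pr p (fun ω => ZTY ω = v' ∧
        (T ω = 0 ∧ (ZTM ω = u ∧ ZMY ω = s))) =
        Pr p (fun ω => T ω = 0 ∧ ZTM ω = u ∧ ZMY ω = s) := by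
      rw [Pr_fiber p ZTY (fun ω => T ω = 0 ∧ (ZTM ω = u ∧ ZMY ω = s))]
    calc Pr p (fun ω => M (T ω) ω = m ∧ (T ω = 0 ∧ ZTM ω = u ∧ ZMY ω = s)) *
          Pr p (fun ω => ZTM ω = u ∧ ZMY ω = s)
        = (∑ v' : V, Pr p (fun ω => ZTY ω = v' ∧
            (M 0 ω = m ∧ T ω = 0 ∧ (ZTM ω = u ∧ ZMY ω = s)))) *
          Pr p (fun ω => ZTM ω = u ∧ ZMY ω = s) := by rw [hsumL]
      _ = ∑ v' : V, Pr p (fun ω => ZTY ω = v' ∧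
            (M 0 ω = m ∧ T ω = 0 ∧ (ZTM ω = u ∧ ZMY ω = s))) *
          Pr p (fun ω => ZTM ω = u ∧ ZMY ω = s) := Finset.sum_mul _ _ _
      _ = ∑ v' : V, Pr p (fun ω => M 0 ω = m ∧ (ZTM ω = u ∧ ZMY ω = s)) *
          Pr p (fun ω => ZTY ω = v' ∧ (T ω = 0 ∧ (ZTM ω = u ∧ ZMY ω = s))) :=
          Finset.sum_congr rfl (fun v' _ => base v')
      _ = Pr p (fun ω => M 0 ω = m ∧ (ZTM ω = u ∧ ZMY ω = s)) *
          ∑ v' : V, Pr p (fun ω => ZTY ω = v' ∧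
            (T ω = 0 ∧ (ZTM ω = u ∧ ZMY ω = s))) := (Finset.mul_sum _ _ _).symm
      _ = _ := by rw [hsumR]
  -- key per-(t,m) identity
  have key : ∀ (t : Fin 2) (m : 𝕄),
      exB p (Y t m) (fun ω => M 0 ω = m ∧ (ZTM ω, ZTY ω, ZMY ω) = (u, v, s)) /
        Pr p (fun ω => (ZTM ω, ZTY ω, ZMY ω) = (u, v, s)) =
      ExCond p (fun ω => Y (T ω) (M (T ω) ω) ω)
          (fun ω => T ω = t ∧ M (T ω) ω = m ∧ ZTY ω = v ∧ ZMY ω = s) *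
        PrCond p (fun ω => M (T ω) ω = m)
          (fun ω => T ω = 0 ∧ ZTM ω = u ∧ ZMY ω = s) := by
    intro t m
    have h1 := hCW t 0 m m (u, v, s) hz
    rw [ExCond_eq_exB, ExCond_eq_exB, PrCond_eq, exB_mul_ind] at h1
    rw [h1, ExCond_eq_exB, PrCond_eq]
    congr 1
    · -- b/Pz = d/e
      rw [div_eq_div_iff hPz (ne_of_gt (htmvs t m))]
      refine mul_right_cancel₀ (ne_of_gt hvs) ?_
      linear_combination Pr p (fun ω => T ω = t ∧ M (T ω) ω = m ∧ ZTY ω = v ∧ ZMY ω = s) * R2 t m -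
        Pr p (fun ω => (ZTM ω, ZTY ω, ZMY ω) = (u, v, s)) * R3 t m
    · -- q/Pz = w/P0
      rw [div_eq_div_iff hPz (ne_of_gt h0us)]
      refine mul_right_cancel₀ (ne_of_gt hus) ?_
      linear_combination Pr p (fun ω => T ω = 0 ∧ ZTM ω = u ∧ ZMY ω = s) * R4 m -
        Pr p (fun ω => (ZTM ω, ZTY ω, ZMY ω) = (u, v, s)) * R5 m
  -- assemble
  rw [← Finset.sum_mul]
  congr 1
  have hsplit : ∀ t : Fin 2,
      exB p (fun ω => Y t (M 0 ω) ω) (fun ω => (ZTM ω, ZTY ω, ZMY ω) = (u, v, s)) =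
      ∑ m : 𝕄, exB p (Y t m)
        (fun ω => M 0 ω = m ∧ (ZTM ω, ZTY ω, ZMY ω) = (u, v, s)) := by
    intro t
    rw [exB_congr_f p (g := fun ω => ∑ m : 𝕄, Y t m ω * (if M 0 ω = m then 1 else 0))
      (fun ω _ => by simp [mul_ite, mul_one, mul_zero, Finset.sum_ite_eq])]
    rw [exB_sum]
    exact Finset.sum_congr rfl (fun m _ => exB_mul_ind p (Y t m) _ _)
  rw [ExCond_eq_exB, exB_sub, hsplit 1, hsplit 0, ← Finset.sum_sub_distrib,
    Finset.sum_div]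
  apply Finset.sum_congr rfl
  intro m _
  rw [sub_div, key 1 m, key 0 m, ← sub_mul]
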